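/- Define f_ε(t) = ε e^{-1/t} (t sin(1/t) − ε) for t > 0 and f_ε(0) = 0. Then for each ε > 0, the equation f_ε(t) = 0 has only finitely many solutions in (0, 1], and the number of solutions in (0,1] tends to infinity as ε → 0⁺. -/

import Mathlib

open Filter Topology

private lemma analyticAt_real_sin (x : ℝ) : AnalyticAt ℝ Real.sin x := by
  have h1 : AnalyticAt ℂ Complex.sin (Complex.ofRealCLM x) :=
    Complex.differentiable_sin.analyticAt _
  have h2 : AnalyticAt ℝ Complex.sin (Complex.ofRealCLM x) := h1.restrictScalars
  have h3 : AnalyticAt ℝ (fun t : ℝ => (Complex.sin t).re) x :=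
    (Complex.reCLM.analyticAt _).comp (h2.comp (Complex.ofRealCLM.analyticAt x))
  have he : (fun t : ℝ => (Complex.sin t).re) = Real.sin := by
    funext t; exact Complex.sin_ofReal_re t
  rwa [he] at h3

/-- For `f_ε(t) = ε e^{-1/t}(t sin(1/t) − ε)` (with `f_ε(0)=0`): for each `ε > 0`
the equation `f_ε(t) = 0` has finitely many solutions in `(0,1]`, and the number
of solutions tends to infinity as `ε → 0⁺`. -/
theorem zeros_of_f_eps (f : ℝ → ℝ → ℝ)
    (hf : ∀ ε t, t ≠ 0 → f ε t = ε * Real.exp (-1/t) * (t * Real.sin (1/t) - ε))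
    (hf0 : ∀ ε, f ε 0 = 0) :
    (∀ ε : ℝ, 0 < ε → {t ∈ Set.Ioc (0:ℝ) 1 | f ε t = 0}.Finite) ∧
      Tendsto (fun ε : ℝ => {t ∈ Set.Ioc (0:ℝ) 1 | f ε t = 0}.ncard)
        (𝓝[>] (0:ℝ)) atTop := by
  have pi_pos := Real.pi_pos
  -- characterization of zeros
  have hchar : ∀ ε t : ℝ, 0 < ε → 0 < t →
      (f ε t = 0 ↔ t * Real.sin (1/t) = ε) := by
    intro ε t hε ht
    rw [hf ε t ht.ne']
    constructor
    · intro h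
      rcases mul_eq_zero.1 h with h1 | h2
      · rcases mul_eq_zero.1 h1 with h3 | h4
        · exact absurd h3 hε.ne'
        · exact absurd h4 (Real.exp_ne_zero _)
      · linarith [sub_eq_zero.1 h2]
    · intro h; rw [h]; ring
  -- Part 1: finiteness
  have part1 : ∀ ε : ℝ, 0 < ε → {t ∈ Set.Ioc (0:ℝ) 1 | f ε t = 0}.Finite := by
    intro ε hε
    by_contra hinf
    have hinf' : Set.Infinite {t ∈ Set.Ioc (0:ℝ) 1 | f ε t = 0} := hinf
    -- every element satisfies ε ≤ t ≤ 1
    have hsub : {t ∈ Set.Ioc (0:ℝ) 1 | f ε t = 0} ⊆ Set.Icc ε 1 := by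
      rintro t ⟨⟨ht0, ht1⟩, htf⟩
      have hg := (hchar ε t hε ht0).1 htf
      have hle : t * Real.sin (1/t) ≤ t * 1 :=
        mul_le_mul_of_nonneg_left (Real.sin_le_one _) ht0.le
      exact ⟨by rw [← hg]; linarith, ht1⟩
    obtain ⟨x₀, hx₀K, hx₀acc⟩ :=
      hinf'.exists_accPt_of_subset_isCompact isCompact_Icc hsub
    have hx₀pos : (0:ℝ) < x₀ := lt_of_lt_of_le hε hx₀K.1
    set g : ℝ → ℝ := fun t => t * Real.sin (1/t) - ε with hgdef
    have hanal : AnalyticOnNhd ℝ g (Set.Ioi 0) := by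
      intro x hx
      have hx' : (0:ℝ) < x := hx
      exact (analyticAt_id.mul
        ((analyticAt_real_sin _).comp
          (analyticAt_const.div analyticAt_id hx'.ne'))).sub analyticAt_const
    have hfreq : ∃ᶠ z in 𝓝[≠] x₀, g z = 0 := by
      rw [frequently_nhdsWithin_iff]
      refine (accPt_iff_frequently.1 hx₀acc).mono ?_
      rintro z ⟨hne, ⟨hz0, _⟩, hzf⟩
      have hzv := (hchar ε z hε hz0).1 hzf
      exact ⟨by simp only [hgdef]; rw [hzv]; ring, hne⟩
    have heq : Set.EqOn g 0 (Set.Ioi 0) :=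
      hanal.eqOn_zero_of_preconnected_of_frequently_eq_zero
        isPreconnected_Ioi hx₀pos hfreq
    have htp : ((2 * Real.pi)⁻¹ : ℝ) ∈ Set.Ioi (0:ℝ) := by
      simp only [Set.mem_Ioi]; positivity
    have hval := heq htp
    simp only [hgdef, one_div, inv_inv, Pi.zero_apply] at hval
    rw [Real.sin_two_pi, mul_zero] at hval
    exact hε.ne' (by linarith)
  refine ⟨part1, ?_⟩
  -- Part 2
  rw [tendsto_atTop]
  intro N
  set a : ℕ → ℝ := fun k => (Real.pi/2 + (k+1 : ℝ) * (2 * Real.pi))⁻¹ with ha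
  set b : ℕ → ℝ := fun k => ((k+1 : ℝ) * (2 * Real.pi))⁻¹ with hb
  have hbden : ∀ k : ℕ, (0:ℝ) < (k+1 : ℝ) * (2 * Real.pi) := by
    intro k; positivity
  have haden : ∀ k : ℕ, (0:ℝ) < Real.pi/2 + (k+1 : ℝ) * (2 * Real.pi) := by
    intro k; positivity
  have hapos : ∀ k, 0 < a k := fun k => inv_pos.2 (haden k)
  have hbpos : ∀ k, 0 < b k := fun k => inv_pos.2 (hbden k)
  have hab : ∀ k, a k < b k := by
    intro k
    exact inv_strictAnti₀ (hbden k) (by linarith)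
  have hb1 : ∀ k, b k < 1 := by
    intro k
    rw [hb, inv_lt_one_iff₀]
    right
    have hk : (1:ℝ) ≤ (k:ℝ) + 1 := by linarith [(Nat.cast_nonneg k : (0:ℝ) ≤ k)]
    nlinarith [Real.pi_gt_three]
  -- values at endpoints
  have hga : ∀ k, (a k) * Real.sin (1/(a k)) = a k := by
    intro k
    have hs : Real.sin (Real.pi/2 + (k+1:ℝ) * (2*Real.pi)) = 1 := by
      have h := Real.sin_add_nat_mul_two_pi (Real.pi/2) (k+1)
      push_cast at h
      rw [h, Real.sin_pi_div_two]
    rw [ha]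
    simp only [one_div, inv_inv]
    rw [hs, mul_one]
  have hgb : ∀ k, (b k) * Real.sin (1/(b k)) = 0 := by
    intro k
    have hs : Real.sin ((k+1:ℝ) * (2*Real.pi)) = 0 := by
      have h := Real.sin_add_nat_mul_two_pi 0 (k+1)
      push_cast at h
      simpa using h
    rw [hb]
    simp only [one_div, inv_inv]
    rw [hs, mul_zero]
  -- monotone separation: for i < j, b j ≤ a i
  have hsep : ∀ i j : ℕ, i < j → b j ≤ a i := by
    intro i j hij
    have hij' : (i:ℝ) + 1 ≤ (j:ℝ) := by exact_mod_cast hij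
    apply inv_anti₀ (haden i)
    nlinarith
  filter_upwards [Ioo_mem_nhdsGT (hapos N)] with ε hε
  obtain ⟨hε0, hεN⟩ := hε
  have haN : ∀ k, k ≤ N → a N ≤ a k := by
    intro k hk
    have hk' : (k:ℝ) ≤ (N:ℝ) := by exact_mod_cast hk
    apply inv_anti₀ (haden k)
    nlinarith
  -- for each k < N there is a solution in (a k, b k)
  have key : ∀ k : ℕ, k < N → ∃ t ∈ Set.Ioo (a k) (b k), t * Real.sin (1/t) = ε := by
    intro k hk
    have hcont : ContinuousOn (fun t : ℝ => t * Real.sin (1/t)) (Set.Icc (a k) (b k)) := by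
      apply ContinuousOn.mul continuousOn_id
      apply Real.continuous_sin.comp_continuousOn
      apply ContinuousOn.div continuousOn_const continuousOn_id
      intro x hx
      exact ne_of_gt (lt_of_lt_of_le (hapos k) hx.1)
    have hmem : ε ∈ Set.Ioo ((fun t : ℝ => t * Real.sin (1/t)) (b k))
        ((fun t : ℝ => t * Real.sin (1/t)) (a k)) := by
      simp only [hga, hgb]
      exact ⟨hε0, lt_of_lt_of_le hεN (haN k hk.le)⟩
    obtain ⟨t, ht, htv⟩ := intermediate_value_Ioo' (hab k).le hcont hmem
    exact ⟨t, ht, htv⟩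
  -- choose solutions
  let T : Fin N → ℝ := fun k => (key k k.2).choose
  have hT : ∀ k : Fin N, T k ∈ Set.Ioo (a k) (b k) ∧ (T k) * Real.sin (1/(T k)) = ε := by
    intro k
    obtain ⟨h1, h2⟩ := (key k k.2).choose_spec
    exact ⟨h1, h2⟩
  have hTanti : StrictAnti T := by
    intro i j hij
    have h1 : T j < b (j : ℕ) := (hT j).1.2
    have h2 : a (i : ℕ) < T i := (hT i).1.1
    have h3 : b (j : ℕ) ≤ a (i : ℕ) := hsep i j hij
    linarith
  have hTinj : Function.Injective T := hTanti.injective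
  have hTS : Set.range T ⊆ {t ∈ Set.Ioc (0:ℝ) 1 | f ε t = 0} := by
    rintro _ ⟨k, rfl⟩
    obtain ⟨⟨hl, hr⟩, hv⟩ := hT k
    have hpos : 0 < T k := lt_trans (hapos k) hl
    refine ⟨⟨hpos, le_of_lt (lt_trans hr (hb1 k))⟩, ?_⟩
    exact (hchar ε (T k) hε0 hpos).2 hv
  calc N = (Set.range T).ncard := by
        rw [← Set.image_univ, Set.ncard_image_of_injective _ hTinj, Set.ncard_univ,
          Nat.card_eq_fintype_card, Fintype.card_fin]
    _ ≤ {t ∈ Set.Ioc (0:ℝ) 1 | f ε t = 0}.ncard :=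
        Set.ncard_le_ncard hTS (part1 ε hε0)
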